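/- Pruning-scan soundness: consider the relaxed game in which, for each group, the first two removed tiles must be removed together as a playable pair but the third and fourth tiles may each be removed individually whenever playable. If the board cannot be cleared under these relaxed rules, then it cannot be cleared under the original rules (where all removals are in same-group playable pairs). -/
import Mathlib


/-- A board is a finite multiset of isolated stacks; each stack is a list of
tile groups, with the head of the list being the top tile of the stack. -/
abbrev Board (G : Type*) := Multiset (List G)

variable {G : Type*} [DecidableEq G]

/-- The number of tiles of group `g` remaining on the board. -/
def tileCount (B : Board G) (g : G) : ℕ := (B.map (fun s => s.count g)).sum

/-- The total number of tiles on the board. -/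
def totalTiles (B : Board G) : ℕ := (B.map List.length).sum

/-- The board obtained by removing the (playable) top tiles of stacks `s₁` and
`s₂`, the remaining stacks being `rest`; emptied stacks disappear. -/
def play (s₁ s₂ : List G) (rest : Board G) : Board G :=
  Multiset.filter (fun s => s ≠ []) (s₁.tail ::ₘ s₂.tail ::ₘ rest)

/-- A legal move: remove two playable (top) tiles of the same group. -/
def Move (B B' : Board G) : Prop :=
  ∃ (g : G) (s₁ s₂ : List G) (rest : Board G),
    B = s₁ ::ₘ s₂ ::ₘ rest ∧ s₁.head? = some g ∧ s₂.head? = some g ∧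
    B' = play s₁ s₂ rest

/-- A board is solvable iff some sequence of legal moves empties it. -/
def Solvable (B : Board G) : Prop := Relation.ReflTransGen Move B 0

/-- All stacks are nonempty and of height at most two. -/
def HeightsOK (B : Board G) : Prop := ∀ s ∈ B, s ≠ [] ∧ s.length ≤ 2

/-- A blocked cycle: distinct groups `p 0, …, p k`, each with exactly two
remaining tiles, such that for each `i` there is a height-two stack with a
`p (i+1)`-tile (cyclically) on top of a `p i`-tile. -/
def BlockedCycle (B : Board G) {k : ℕ} (p : Fin (k + 1) → G) : Prop :=
  Function.Injective p ∧ (∀ i, tileCount B (p i) = 2) ∧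
    ∀ i, [p (i + 1), p i] ∈ B

/-- The board contains some blocked cycle. -/
def HasBlockedCycle (B : Board G) : Prop :=
  ∃ (k : ℕ) (p : Fin (k + 1) → G), BlockedCycle B p

/-- A relaxed (pruning-scan) move relative to the initial board `B₀`: either
remove a playable pair of a group no tile of which has been removed yet, or
remove a single playable tile of a group from which at least two tiles have
already been removed. -/
def RMove (B₀ : Board G) (C C' : Board G) : Prop :=
  (∃ (g : G) (s₁ s₂ : List G) (rest : Board G),
      C = s₁ ::ₘ s₂ ::ₘ rest ∧ s₁.head? = some g ∧ s₂.head? = some g ∧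
      tileCount C g = tileCount B₀ g ∧ C' = play s₁ s₂ rest) ∨
  (∃ (g : G) (s : List G) (rest : Board G),
      C = s ::ₘ rest ∧ s.head? = some g ∧
      tileCount C g + 2 ≤ tileCount B₀ g ∧
      C' = Multiset.filter (fun t => t ≠ []) (s.tail ::ₘ rest))

/-- Relaxed solvability of a position `C` in the relaxed game started at `B₀`. -/
def RSolvable (B₀ C : Board G) : Prop := Relation.ReflTransGen (RMove B₀) C 0


lemma tileCount_cons (s : List G) (M : Board G) (g : G) :
    tileCount (s ::ₘ M) g = s.count g + tileCount M g := by
  simp [tileCount]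

lemma tileCount_filter (M : Board G) (g : G) :
    tileCount (Multiset.filter (fun t => t ≠ []) M) g = tileCount M g := by
  induction M using Multiset.induction with
  | empty => simp
  | cons a s ih =>
    by_cases ha : a = []
    · rw [Multiset.filter_cons_of_neg _ (by simp [ha]), tileCount_cons, ih, ha]
      simp
    · rw [Multiset.filter_cons_of_pos _ (by simp [ha]), tileCount_cons, ih, tileCount_cons]

lemma count_head {s : List G} {g : G} (h : s.head? = some g) (x : G) :
    s.count x = s.tail.count x + if g = x then 1 else 0 := by
  cases s with
  | nil => simp at h
  | cons a t =>
    rw [List.head?_cons, Option.some_inj] at h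
    subst h
    simp only [List.tail_cons, List.count_cons]
    rcases eq_or_ne x a with rfl | hx
    · simp
    · simp [hx, Ne.symm hx]

lemma filter_idem (M : Board G) :
    Multiset.filter (fun t : List G => t ≠ []) (Multiset.filter (fun t => t ≠ []) M)
      = Multiset.filter (fun t => t ≠ []) M := by
  rw [Multiset.filter_filter]
  exact Multiset.filter_congr (by tauto)

lemma filter_cons_filter (a : List G) (M : Board G) :
    Multiset.filter (fun t : List G => t ≠ []) (a ::ₘ Multiset.filter (fun t => t ≠ []) M)
      = Multiset.filter (fun t => t ≠ []) (a ::ₘ M) := by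
  by_cases ha : a = []
  · rw [Multiset.filter_cons_of_neg _ (by simp [ha]),
      Multiset.filter_cons_of_neg _ (by simp [ha]), filter_idem]
  · rw [Multiset.filter_cons_of_pos _ (by simp [ha]),
      Multiset.filter_cons_of_pos _ (by simp [ha]), filter_idem]

lemma key (B : Board G) (C : Board G) (h : Relation.ReflTransGen Move C (0 : Board G)) :
    (∀ g, tileCount C g = tileCount B g ∨ tileCount C g + 2 ≤ tileCount B g) →
    RSolvable B C := by
  induction h using Relation.ReflTransGen.head_induction_on with
  | refl => intro _; exact Relation.ReflTransGen.refl
  | head hmv hrest ih =>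
    intro hinv
    obtain ⟨g, s₁, s₂, rest, hC, h1, h2, hC'⟩ := hmv
    subst hC; subst hC'
    have hc1 := count_head h1
    have hc2 := count_head h2
    have hCc : ∀ x, tileCount (s₁ ::ₘ s₂ ::ₘ rest) x
        = tileCount (play s₁ s₂ rest) x + (if g = x then 2 else 0) := by
      intro x
      simp only [play, tileCount_filter, tileCount_cons, hc1 x, hc2 x]
      by_cases hx : g = x <;> simp [hx] <;> ring
    have hinv' : ∀ x, tileCount (play s₁ s₂ rest) x = tileCount B x ∨
        tileCount (play s₁ s₂ rest) x + 2 ≤ tileCount B x := by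
      intro x
      rcases hinv x with he | hle <;> by_cases hx : g = x <;>
        [skip; skip; skip; skip] <;>
        · have := hCc x
          simp [hx] at this <;> omega
    rcases hinv g with he | hle
    · exact Relation.ReflTransGen.head
        (Or.inl ⟨g, s₁, s₂, rest, rfl, h1, h2, he, rfl⟩) (ih hinv')
    · have hs₂ne : s₂ ≠ [] := by cases s₂ <;> simp_all
      set p : List G → Prop := fun t => t ≠ [] with hp
      have hC₁ : Multiset.filter p (s₁.tail ::ₘ s₂ ::ₘ rest)
          = s₂ ::ₘ Multiset.filter p (s₁.tail ::ₘ rest) := by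
        rw [Multiset.cons_swap, Multiset.filter_cons_of_pos]
        exact hs₂ne
      have step1 : RMove B (s₁ ::ₘ s₂ ::ₘ rest)
          (Multiset.filter p (s₁.tail ::ₘ s₂ ::ₘ rest)) :=
        Or.inr ⟨g, s₁, s₂ ::ₘ rest, rfl, h1, hle, rfl⟩
      have hcnt : tileCount (s₂ ::ₘ Multiset.filter p (s₁.tail ::ₘ rest)) g + 1
          = tileCount (s₁ ::ₘ s₂ ::ₘ rest) g := by
        simp only [tileCount_cons, hp, tileCount_filter, hc1 g]
        simp
        ring
      have hplay : Multiset.filter p (s₂.tail ::ₘ Multiset.filter p (s₁.tail ::ₘ rest))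
          = play s₁ s₂ rest := by
        rw [play, Multiset.cons_swap]
        exact filter_cons_filter _ _
      have step2 : RMove B (Multiset.filter p (s₁.tail ::ₘ s₂ ::ₘ rest)) (play s₁ s₂ rest) :=
        Or.inr ⟨g, s₂, Multiset.filter p (s₁.tail ::ₘ rest), hC₁, h2,
          by rw [hC₁]; omega, hplay.symm⟩
      exact Relation.ReflTransGen.head step1
        (Relation.ReflTransGen.head step2 (ih hinv'))

/-- pruning-scan soundness: a board solvable under the original
rules is solvable under the relaxed rules. -/
theorem stmt14 (B : Board G) (h : Solvable B) : RSolvable B B := key B B h (fun g => Or.inl rfl)
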